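/- Let c be a coefficient, μ > 0 and λ ∈ ℝ with c(y)·(λ − c(y)μ²) > 1 for a.e. y ∈ [0,H]. Let u be a nontrivial Dirichlet solution of the reduced problem with flux v. Suppose z < z' are consecutive zeros of u in [0,H] (i.e. u(z) = u(z') = 0 and u has no zero in (z,z')), and let y* ∈ (z,z') satisfy v(y*) = 0. Then min( v(z)², v(z')² ) ≥ u(y*)². -/

import Mathlib

open MeasureTheory Set Filter Topology

noncomputable section

/-- `u` (with flux `v = c·u'` and weak derivative `g = u'`) is a solution of the reduced
problem `(c u')' + (λ - c μ²) u = 0` on the interval `[a, b]`: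
`u` is absolutely continuous with derivative `g ∈ L²`, the flux `v` agrees a.e. with `c·g`,
and `v` is absolutely continuous with derivative `(c μ² - λ)·u`. -/
def IsReducedSolutionOn (a b : ℝ) (c : ℝ → ℝ) (μ lam : ℝ) (u v g : ℝ → ℝ) : Prop :=
  IntervalIntegrable g volume a b ∧
  IntervalIntegrable (fun t => g t ^ 2) volume a b ∧
  (∀ y ∈ Set.Icc a b, u y = u a + ∫ t in a..y, g t) ∧
  (∀ᵐ y ∂volume.restrict (Set.Ioo a b), v y = c y * g y) ∧
  IntervalIntegrable (fun t => (c t * μ ^ 2 - lam) * u t) volume a b ∧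
  (∀ y ∈ Set.Icc a b, v y = v a + ∫ t in a..y, (c t * μ ^ 2 - lam) * u t)

/-- A coefficient on `[0, H]`: measurable and bounded between `cm` and `cM`. -/
def IsCoeff (H cm cM : ℝ) (c : ℝ → ℝ) : Prop :=
  Measurable c ∧ ∀ y ∈ Set.Icc (0 : ℝ) H, cm ≤ c y ∧ c y ≤ cM

open intervalIntegral in
lemma sq_primitive (a b : ℝ) (hab : a ≤ b) (φ : ℝ → ℝ)
    (hφ : IntervalIntegrable φ volume a b) :
    (∫ t in a..b, φ t) ^ 2 = 2 * ∫ t in a..b, φ t * ∫ s in a..t, φ s := by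
  set μ0 := volume.restrict (Ioc a b) with hμ0
  have hφ' : Integrable φ μ0 := hφ.1
  set Φ : ℝ → ℝ := fun t => ∫ s in a..t, φ s with hΦdef
  set L : ℝ := ∫ t in a..b, φ t with hL
  have hΦcont : ContinuousOn Φ (uIcc a b) :=
    continuousOn_primitive_interval' hφ left_mem_uIcc
  have hφΦ : IntervalIntegrable (fun t => φ t * Φ t) volume a b :=
    hφ.mul_continuousOn hΦcont
  have hK : Integrable (fun p : ℝ × ℝ => φ p.1 * φ p.2) (μ0.prod μ0) :=
    Integrable.mul_prod hφ' hφ'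
  have hmeas : MeasurableSet {p : ℝ × ℝ | p.2 ≤ p.1} :=
    measurableSet_le measurable_snd measurable_fst
  set f : ℝ → ℝ → ℝ := fun t s => if s ≤ t then φ t * φ s else 0 with hf
  have hunc : Function.uncurry f = {p : ℝ × ℝ | p.2 ≤ p.1}.indicator
      (fun p => φ p.1 * φ p.2) := by
    ext p
    by_cases h : p.2 ≤ p.1 <;> simp [Function.uncurry, hf, h, Set.indicator]
  have hfint : Integrable (Function.uncurry f) (μ0.prod μ0) := by
    rw [hunc]; exact hK.indicator hmeas
  -- first iterated integral
  have inner1 : ∀ t ∈ Ioc a b, (∫ s, f t s ∂μ0) = φ t * Φ t := by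
    intro t ht
    have h1 : (fun s => f t s) = (Iic t).indicator (fun s => φ t * φ s) := by
      ext s
      by_cases h : s ≤ t <;> simp [hf, h, Set.indicator]
    rw [h1, MeasureTheory.integral_indicator measurableSet_Iic, hμ0,
      Measure.restrict_restrict measurableSet_Iic]
    have h2 : Iic t ∩ Ioc a b = Ioc a t := by
      ext s
      simp only [mem_inter_iff, mem_Iic, mem_Ioc]
      constructor
      · rintro ⟨h1, h2, _⟩; exact ⟨h2, h1⟩
      · rintro ⟨h1, h2⟩; exact ⟨h2, h1, h2.trans ht.2⟩
    rw [h2, MeasureTheory.integral_const_mul, ← intervalIntegral.integral_of_le ht.1.le]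
  have first : (∫ t, ∫ s, f t s ∂μ0 ∂μ0) = ∫ t in a..b, φ t * Φ t := by
    rw [intervalIntegral.integral_of_le hab]
    exact integral_congr_ae (((ae_restrict_mem measurableSet_Ioc).mono
      fun t ht => inner1 t ht))
  -- second iterated integral
  have inner2 : ∀ s ∈ Ioc a b, (∫ t, f t s ∂μ0) = (L - Φ s) * φ s := by
    intro s hs
    have h1 : (fun t => f t s) = (Ici s).indicator (fun t => φ t * φ s) := by
      ext t
      by_cases h : s ≤ t <;> simp [hf, h, Set.indicator]
    rw [h1, MeasureTheory.integral_indicator measurableSet_Ici, hμ0,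
      Measure.restrict_restrict measurableSet_Ici]
    have h2 : Ici s ∩ Ioc a b = Icc s b := by
      ext t
      simp only [mem_inter_iff, mem_Ici, mem_Ioc, mem_Icc]
      constructor
      · rintro ⟨h1, _, h3⟩; exact ⟨h1, h3⟩
      · rintro ⟨h1, h3⟩; exact ⟨h1, hs.1.trans_le h1, h3⟩
    rw [h2, integral_Icc_eq_integral_Ioc, MeasureTheory.integral_mul_const]
    have h3 : Φ s + ∫ t in s..b, φ t = L := by
      rw [hΦdef, hL]
      exact intervalIntegral.integral_add_adjacent_intervals
        (hφ.mono_set (by rw [uIcc_of_le hab, uIcc_of_le hs.1.le]; exact Icc_subset_Icc le_rfl hs.2))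
        (hφ.mono_set (by rw [uIcc_of_le hab, uIcc_of_le hs.2]; exact Icc_subset_Icc hs.1.le le_rfl))
    have h4 : (∫ t in Ioc s b, φ t) = L - Φ s := by
      rw [← intervalIntegral.integral_of_le hs.2]
      linarith
    rw [h4]
  have second : (∫ s, ∫ t, f t s ∂μ0 ∂μ0) = ∫ s in a..b, (L - Φ s) * φ s := by
    rw [intervalIntegral.integral_of_le hab]
    exact integral_congr_ae (((ae_restrict_mem measurableSet_Ioc).mono
      fun s hs => inner2 s hs))
  have swap : (∫ t, ∫ s, f t s ∂μ0 ∂μ0) = ∫ s, ∫ t, f t s ∂μ0 ∂μ0 :=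
    integral_integral_swap hfint
  have split : (∫ s in a..b, (L - Φ s) * φ s) = L * L - ∫ t in a..b, φ t * Φ t := by
    have : (∫ s in a..b, (L - Φ s) * φ s) = (∫ s in a..b, L * φ s) - ∫ s in a..b, Φ s * φ s := by
      rw [← intervalIntegral.integral_sub (hφ.const_mul L) (hφΦ.congr ?_)]
      · apply intervalIntegral.integral_congr
        intro s _; ring
      · intro s _; exact mul_comm (φ s) (Φ s)
    rw [this, intervalIntegral.integral_const_mul, ← hL]
    congr 1
    apply intervalIntegral.integral_congr
    intro s _; exact mul_comm (Φ s) (φ s)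
  have key : (∫ t in a..b, φ t * Φ t) = L * L - ∫ t in a..b, φ t * Φ t :=
    first.symm.trans (swap.trans (second.trans split))
  have : L ^ 2 = 2 * ∫ t in a..b, φ t * Φ t := by nlinarith [key]
  exact this

open intervalIntegral in
lemma sq_ftc (a b : ℝ) (hab : a ≤ b) (φ : ℝ → ℝ)
    (hφ : IntervalIntegrable φ volume a b) (F : ℝ → ℝ)
    (hF : ∀ x ∈ Icc a b, F x = F a + ∫ t in a..x, φ t) :
    F b ^ 2 - F a ^ 2 = ∫ t in a..b, 2 * (φ t * F t) := by
  have hΦcont : ContinuousOn (fun t => ∫ s in a..t, φ s) (uIcc a b) :=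
    continuousOn_primitive_interval' hφ left_mem_uIcc
  have hcong : (∫ t in a..b, 2 * (φ t * F t))
      = ∫ t in a..b, (2 * F a * φ t + 2 * (φ t * ∫ s in a..t, φ s)) := by
    apply intervalIntegral.integral_congr
    intro t ht
    rw [uIcc_of_le hab] at ht
    simp only [hF t ht]; ring
  have h1 : IntervalIntegrable (fun t => 2 * F a * φ t) volume a b := hφ.const_mul _
  have h2 : IntervalIntegrable (fun t => 2 * (φ t * ∫ s in a..t, φ s)) volume a b :=
    (hφ.mul_continuousOn hΦcont).const_mul 2
  rw [hcong, intervalIntegral.integral_add h1 h2]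
  have h3 : (∫ t in a..b, 2 * F a * φ t) = 2 * F a * ∫ t in a..b, φ t := by
    rw [← intervalIntegral.integral_const_mul]
  have h4 : (∫ t in a..b, 2 * (φ t * ∫ s in a..t, φ s)) = (∫ t in a..b, φ t) ^ 2 := by
    rw [intervalIntegral.integral_const_mul, sq_primitive a b hab φ hφ]
  rw [h3, h4, hF b (right_mem_Icc.mpr hab)]
  ring


lemma aemem_Ioo (x y : ℝ) : ∀ᵐ t ∂(volume.restrict (Icc x y)), t ∈ Ioo x y := by
  have h1 : ∀ᵐ t ∂(volume : Measure ℝ), (t ∈ Ioo x y ↔ t ∈ Icc x y) :=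
    Filter.eventuallyEq_set.mp Ioo_ae_eq_Icc
  filter_upwards [ae_restrict_of_ae h1, ae_restrict_mem measurableSet_Icc] with t h ht
    using h.mpr ht


open intervalIntegral in
lemma stmt11_aux (cm cM H : ℝ) (hcm : 0 < cm) (hH0 : (0:ℝ) ≤ H) (c : ℝ → ℝ)
    (hcb : ∀ y ∈ Set.Icc (0:ℝ) H, cm ≤ c y ∧ c y ≤ cM)
    (μ lam : ℝ)
    (hbig : ∀ᵐ y ∂volume.restrict (Set.Icc (0:ℝ) H), 1 < c y * (lam - c y * μ ^ 2))
    (u v g : ℝ → ℝ) (hsol : IsReducedSolutionOn 0 H c μ lam u v g)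
    (z z' : ℝ) (hz : z ∈ Set.Icc (0:ℝ) H) (hz' : z' ∈ Set.Icc (0:ℝ) H) (hzz : z < z')
    (huz : u z = 0) (huz' : u z' = 0)
    (hpos : ∀ y ∈ Set.Ioo z z', 0 < u y)
    (ystar : ℝ) (hys : ystar ∈ Set.Ioo z z') (hvs : v ystar = 0) :
    u ystar ^ 2 ≤ min (v z ^ 2) (v z' ^ 2) := by
  obtain ⟨hg, hg2, hu_rep, hvcg, hw_int, hv_rep⟩ := hsol
  set w : ℝ → ℝ := fun t => (c t * μ ^ 2 - lam) * u t with hwdef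
  have h0z : (0:ℝ) ≤ z := hz.1
  have hz'H : z' ≤ H := hz'.2
  have h0m : (0:ℝ) ∈ Icc (0:ℝ) H := ⟨le_rfl, hH0⟩
  have hle1 : z ≤ ystar := hys.1.le
  have hle2 : ystar ≤ z' := hys.2.le
  have hysm : ystar ∈ Icc (0:ℝ) H := ⟨h0z.trans hle1, hle2.trans hz'H⟩
  have hsubI : ∀ x y : ℝ, x ∈ Icc (0:ℝ) H → y ∈ Icc (0:ℝ) H → uIcc x y ⊆ uIcc (0:ℝ) H :=
    fun x y hx hy => uIcc_subset_uIcc (by rwa [uIcc_of_le hH0]) (by rwa [uIcc_of_le hH0])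
  have hgsub : ∀ x y : ℝ, x ∈ Icc (0:ℝ) H → y ∈ Icc (0:ℝ) H →
      IntervalIntegrable g volume x y := fun x y hx hy => hg.mono_set (hsubI x y hx hy)
  have hwsub : ∀ x y : ℝ, x ∈ Icc (0:ℝ) H → y ∈ Icc (0:ℝ) H →
      IntervalIntegrable w volume x y := fun x y hx hy => hw_int.mono_set (hsubI x y hx hy)
  have hudiff : ∀ x ∈ Icc (0:ℝ) H, ∀ y ∈ Icc (0:ℝ) H, u y - u x = ∫ t in x..y, g t := by
    intro x hx y hy
    have h := intervalIntegral.integral_interval_sub_left (hgsub 0 y h0m hy) (hgsub 0 x h0m hx)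
    rw [hu_rep y hy, hu_rep x hx]
    linarith
  have hvdiff : ∀ x ∈ Icc (0:ℝ) H, ∀ y ∈ Icc (0:ℝ) H, v y - v x = ∫ t in x..y, w t := by
    intro x hx y hy
    have h := intervalIntegral.integral_interval_sub_left (hwsub 0 y h0m hy) (hwsub 0 x h0m hx)
    rw [hv_rep y hy, hv_rep x hx]
    linarith
  have hucont : ContinuousOn u (Icc (0:ℝ) H) := by
    have h := intervalIntegral.continuousOn_primitive_interval' hg (left_mem_uIcc (a := (0:ℝ)) (b := H))
    rw [uIcc_of_le hH0] at h
    exact (continuousOn_const.add h).congr fun y hy => hu_rep y hy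
  have hvcont : ContinuousOn v (Icc (0:ℝ) H) := by
    have h := intervalIntegral.continuousOn_primitive_interval' hw_int (left_mem_uIcc (a := (0:ℝ)) (b := H))
    rw [uIcc_of_le hH0] at h
    exact (continuousOn_const.add h).congr fun y hy => hv_rep y hy
  have hbig2 : ∀ᵐ t ∂(volume : Measure ℝ), t ∈ Icc (0:ℝ) H → 1 < c t * (lam - c t * μ ^ 2) :=
    (ae_restrict_iff' measurableSet_Icc).mp hbig
  have hcg2 : ∀ᵐ t ∂(volume : Measure ℝ), t ∈ Ioo (0:ℝ) H → v t = c t * g t :=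
    (ae_restrict_iff' measurableSet_Ioo).mp hvcg
  -- the flux integrand is nonpositive on subintervals of [z, z']
  have hwint_nonpos : ∀ x y : ℝ, z ≤ x → x ≤ y → y ≤ z' → (∫ s in x..y, w s) ≤ 0 := by
    intro x y hzx hxy hyz'
    have hIcc : Icc x y ⊆ Icc (0:ℝ) H := Icc_subset_Icc (h0z.trans hzx) (hyz'.trans hz'H)
    have h0 : 0 ≤ ∫ s in x..y, -(w s) := by
      apply intervalIntegral.integral_nonneg_of_ae_restrict hxy
      filter_upwards [aemem_Ioo x y, ae_restrict_of_ae hbig2] with s hsI hB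
      have hs1 : s ∈ Ioo z z' := ⟨hzx.trans_lt hsI.1, hsI.2.trans_le hyz'⟩
      have hs2 : s ∈ Icc (0:ℝ) H := hIcc (Ioo_subset_Icc_self hsI)
      have hB' := hB hs2
      have hcpos : 0 < c s := hcm.trans_le (hcb s hs2).1
      have hu := hpos s hs1
      have hlam : 0 < lam - c s * μ ^ 2 := by nlinarith
      have hws : w s ≤ 0 := mul_nonpos_of_nonpos_of_nonneg (by linarith) hu.le
      simp only [Pi.zero_apply]
      linarith
    rw [intervalIntegral.integral_neg] at h0
    linarith
  have hvnn : ∀ t ∈ Ioo z ystar, 0 ≤ v t := by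
    intro t ht
    have htm : t ∈ Icc (0:ℝ) H := ⟨h0z.trans ht.1.le, (ht.2.le.trans hle2).trans hz'H⟩
    have h := hvdiff t htm ystar hysm
    have h2 := hwint_nonpos t ystar ht.1.le ht.2.le hle2
    rw [hvs] at h
    linarith
  have hvnp : ∀ t ∈ Ioo ystar z', v t ≤ 0 := by
    intro t ht
    have htm : t ∈ Icc (0:ℝ) H := ⟨h0z.trans (hle1.trans ht.1.le), ht.2.le.trans hz'H⟩
    have h := hvdiff ystar hysm t htm
    have h2 := hwint_nonpos ystar t hle1 ht.1.le ht.2.le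
    rw [hvs] at h
    linarith
  have hzm : z ∈ Icc (0:ℝ) H := hz
  have hz'm : z' ∈ Icc (0:ℝ) H := hz'
  -- representations on the two subintervals
  have hFu1 : ∀ x ∈ Icc z ystar, u x = u z + ∫ t in z..x, g t := by
    intro x hx
    have hxm : x ∈ Icc (0:ℝ) H := ⟨h0z.trans hx.1, hx.2.trans (hle2.trans hz'H)⟩
    have := hudiff z hzm x hxm; linarith
  have hFv1 : ∀ x ∈ Icc z ystar, v x = v z + ∫ t in z..x, w t := by
    intro x hx
    have hxm : x ∈ Icc (0:ℝ) H := ⟨h0z.trans hx.1, hx.2.trans (hle2.trans hz'H)⟩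
    have := hvdiff z hzm x hxm; linarith
  have hFu2 : ∀ x ∈ Icc ystar z', u x = u ystar + ∫ t in ystar..x, g t := by
    intro x hx
    have hxm : x ∈ Icc (0:ℝ) H := ⟨hysm.1.trans hx.1, hx.2.trans hz'H⟩
    have := hudiff ystar hysm x hxm; linarith
  have hFv2 : ∀ x ∈ Icc ystar z', v x = v ystar + ∫ t in ystar..x, w t := by
    intro x hx
    have hxm : x ∈ Icc (0:ℝ) H := ⟨hysm.1.trans hx.1, hx.2.trans hz'H⟩
    have := hvdiff ystar hysm x hxm; linarith
  have Eu1 := sq_ftc z ystar hle1 g (hgsub z ystar hzm hysm) u hFu1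
  have Ev1 := sq_ftc z ystar hle1 w (hwsub z ystar hzm hysm) v hFv1
  have Eu2 := sq_ftc ystar z' hle2 g (hgsub ystar z' hysm hz'm) u hFu2
  have Ev2 := sq_ftc ystar z' hle2 w (hwsub ystar z' hysm hz'm) v hFv2
  -- integrability of the products
  have hsub1 : Icc z ystar ⊆ Icc (0:ℝ) H := Icc_subset_Icc h0z (hle2.trans hz'H)
  have hsub2 : Icc ystar z' ⊆ Icc (0:ℝ) H := Icc_subset_Icc hysm.1 hz'H
  have hgu1 : IntervalIntegrable (fun t => 2 * (g t * u t)) volume z ystar :=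
    ((hgsub z ystar hzm hysm).mul_continuousOn
      (hucont.mono ((uIcc_of_le hle1).le.trans hsub1))).const_mul 2
  have hwv1 : IntervalIntegrable (fun t => 2 * (w t * v t)) volume z ystar :=
    ((hwsub z ystar hzm hysm).mul_continuousOn
      (hvcont.mono ((uIcc_of_le hle1).le.trans hsub1))).const_mul 2
  have hgu2 : IntervalIntegrable (fun t => 2 * (g t * u t)) volume ystar z' :=
    ((hgsub ystar z' hysm hz'm).mul_continuousOn
      (hucont.mono ((uIcc_of_le hle2).le.trans hsub2))).const_mul 2
  have hwv2 : IntervalIntegrable (fun t => 2 * (w t * v t)) volume ystar z' :=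
    ((hwsub ystar z' hysm hz'm).mul_continuousOn
      (hvcont.mono ((uIcc_of_le hle2).le.trans hsub2))).const_mul 2
  -- the energy integrand is signed
  have key1 : (∫ t in z..ystar, (2 * (g t * u t) + 2 * (w t * v t))) ≤ 0 := by
    have h0 : 0 ≤ ∫ t in z..ystar, -(2 * (g t * u t) + 2 * (w t * v t)) := by
      apply intervalIntegral.integral_nonneg_of_ae_restrict hle1
      filter_upwards [aemem_Ioo z ystar, ae_restrict_of_ae hbig2, ae_restrict_of_ae hcg2]
        with t htI hB hV
      have ht1 : t ∈ Ioo z z' := ⟨htI.1, htI.2.trans hys.2⟩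
      have ht2 : t ∈ Icc (0:ℝ) H := ⟨h0z.trans htI.1.le, (htI.2.le.trans hle2).trans hz'H⟩
      have ht3 : t ∈ Ioo (0:ℝ) H := ⟨h0z.trans_lt htI.1, (htI.2.trans_le hle2).trans_le hz'H⟩
      have hB' := hB ht2
      have hV' := hV ht3
      have hcpos : 0 < c t := hcm.trans_le (hcb t ht2).1
      have hu := hpos t ht1
      have hvt := hvnn t htI
      have hg0 : 0 ≤ g t := by
        by_contra hneg
        push_neg at hneg
        nlinarith [mul_pos hcpos (neg_pos.mpr hneg)]
      simp only [Pi.zero_apply, hwdef]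
      rw [hV']
      nlinarith [mul_nonneg (mul_nonneg hg0 hu.le) (sub_nonneg.mpr hB'.le)]
    rw [intervalIntegral.integral_neg] at h0
    linarith
  have key2 : 0 ≤ ∫ t in ystar..z', (2 * (g t * u t) + 2 * (w t * v t)) := by
    apply intervalIntegral.integral_nonneg_of_ae_restrict hle2
    filter_upwards [aemem_Ioo ystar z', ae_restrict_of_ae hbig2, ae_restrict_of_ae hcg2]
      with t htI hB hV
    have ht1 : t ∈ Ioo z z' := ⟨hys.1.trans htI.1, htI.2⟩
    have ht2 : t ∈ Icc (0:ℝ) H := ⟨h0z.trans ht1.1.le, ht1.2.le.trans hz'H⟩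
    have ht3 : t ∈ Ioo (0:ℝ) H := ⟨h0z.trans_lt ht1.1, ht1.2.trans_le hz'H⟩
    have hB' := hB ht2
    have hV' := hV ht3
    have hcpos : 0 < c t := hcm.trans_le (hcb t ht2).1
    have hu := hpos t ht1
    have hvt := hvnp t htI
    have hg0 : g t ≤ 0 := by
      by_contra hneg
      push_neg at hneg
      nlinarith [mul_pos hcpos hneg]
    simp only [Pi.zero_apply, hwdef]
    rw [hV']
    nlinarith [mul_nonneg (mul_nonneg (neg_nonneg.mpr hg0) hu.le) (sub_nonneg.mpr hB'.le)]
  have hIadd1 := intervalIntegral.integral_add hgu1 hwv1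
  have hIadd2 := intervalIntegral.integral_add hgu2 hwv2
  rw [hIadd1] at key1
  rw [hIadd2] at key2
  rw [huz] at Eu1
  rw [hvs] at Ev1
  rw [huz'] at Eu2
  rw [hvs] at Ev2
  norm_num at Eu1 Ev1 Eu2 Ev2
  simp only [intervalIntegral.integral_const_mul] at key1 key2
  refine le_min ?_ ?_
  · linarith
  · linarith

/-- between consecutive zeros `z < z'` of `u`, the flux at the endpoints
dominates the interior amplitude: `min(v(z)², v(z')²) ≥ u(y*)²` where `v(y*) = 0`. -/
theorem stmt11 (cm cM H : ℝ) (hcm : 0 < cm) (hcmM : cm < cM) (hH : 0 < H)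
    (c : ℝ → ℝ) (hc : IsCoeff H cm cM c)
    (μ lam : ℝ) (hμ : 0 < μ)
    (hbig : ∀ᵐ y ∂volume.restrict (Set.Icc (0:ℝ) H), 1 < c y * (lam - c y * μ ^ 2))
    (u v g : ℝ → ℝ) (hsol : IsReducedSolutionOn 0 H c μ lam u v g)
    (hu0 : u 0 = 0) (huH : u H = 0) (hnt : ∃ y ∈ Set.Icc (0 : ℝ) H, u y ≠ 0)
    (z z' : ℝ) (hz : z ∈ Set.Icc (0:ℝ) H) (hz' : z' ∈ Set.Icc (0:ℝ) H) (hzz : z < z')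
    (huz : u z = 0) (huz' : u z' = 0) (hcons : ∀ y ∈ Set.Ioo z z', u y ≠ 0)
    (ystar : ℝ) (hys : ystar ∈ Set.Ioo z z') (hvs : v ystar = 0) :
    u ystar ^ 2 ≤ min (v z ^ 2) (v z' ^ 2) := by
  obtain ⟨hcmeas, hcb⟩ := hc
  have hH0 : (0:ℝ) ≤ H := hH.le
  have hucont : ContinuousOn u (Icc (0:ℝ) H) := by
    have h := intervalIntegral.continuousOn_primitive_interval' hsol.1
      (left_mem_uIcc (a := (0:ℝ)) (b := H))
    rw [uIcc_of_le hH0] at h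
    exact (continuousOn_const.add h).congr fun y hy => hsol.2.2.1 y hy
  by_cases hcase : ∀ y ∈ Set.Ioo z z', 0 < u y
  · exact stmt11_aux cm cM H hcm hH0 c hcb μ lam hbig u v g hsol z z' hz hz' hzz
      huz huz' hcase ystar hys hvs
  · push_neg at hcase
    obtain ⟨y₀, hy₀, hy₀le⟩ := hcase
    have hy₀neg : u y₀ < 0 := lt_of_le_of_ne hy₀le (hcons y₀ hy₀)
    have hIooZ : Set.Ioo z z' ⊆ Set.Icc (0:ℝ) H :=
      fun t ht => ⟨hz.1.trans ht.1.le, ht.2.le.trans hz'.2⟩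
    have hneg : ∀ y ∈ Set.Ioo z z', u y < 0 := by
      intro y hy
      rcases lt_or_ge (u y) 0 with h | h
      · exact h
      have hy2 : 0 < u y := lt_of_le_of_ne h (Ne.symm (hcons y hy))
      have hsub : uIcc y₀ y ⊆ Set.Ioo z z' := (Set.ordConnected_Ioo).uIcc_subset hy₀ hy
      have hcont : ContinuousOn u (uIcc y₀ y) := hucont.mono (hsub.trans hIooZ)
      have h0m : (0:ℝ) ∈ uIcc (u y₀) (u y) := by
        rw [Set.mem_uIcc]
        exact Or.inl ⟨hy₀neg.le, hy2.le⟩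
      obtain ⟨x, hx, hux⟩ := intermediate_value_uIcc hcont h0m
      exact absurd hux (hcons x (hsub hx))
    have hsolneg : IsReducedSolutionOn 0 H c μ lam (fun y => -u y) (fun y => -v y)
        (fun y => -g y) := by
      obtain ⟨h1, h2, h3, h4, h5, h6⟩ := hsol
      refine ⟨h1.neg, ?_, ?_, ?_, ?_, ?_⟩
      · have heq : (fun t => (-g t) ^ 2) = fun t => g t ^ 2 := by funext t; ring
        show IntervalIntegrable (fun t => (-g t) ^ 2) volume 0 H
        rw [heq]; exact h2
      · intro y hy
        show -u y = -u 0 + ∫ t in (0:ℝ)..y, -g t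
        rw [intervalIntegral.integral_neg]
        have := h3 y hy
        linarith
      · filter_upwards [h4] with t ht
        show -v t = c t * (-g t)
        rw [ht]; ring
      · show IntervalIntegrable (fun t => (c t * μ ^ 2 - lam) * (-u t)) volume 0 H
        have heq : (fun t => (c t * μ ^ 2 - lam) * (-u t))
            = fun t => -((c t * μ ^ 2 - lam) * u t) := by funext t; ring
        rw [heq]; exact h5.neg
      · intro y hy
        show -v y = -v 0 + ∫ t in (0:ℝ)..y, (c t * μ ^ 2 - lam) * (-u t)
        have heq : (fun t => (c t * μ ^ 2 - lam) * (-u t))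
            = fun t => -((c t * μ ^ 2 - lam) * u t) := by funext t; ring
        rw [heq, intervalIntegral.integral_neg]
        have := h6 y hy
        linarith
    have h := stmt11_aux cm cM H hcm hH0 c hcb μ lam hbig _ _ _ hsolneg z z' hz hz' hzz
      (by simp [huz]) (by simp [huz']) (fun y hy => by simpa using hneg y hy)
      ystar hys (by simp [hvs])
    simpa [neg_sq] using h
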